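/- Every finite extension K/F of fields of characteristic zero equipped with an involution * (with F *-invariant) is generated over F by a single element that is either symmetric (θ* = θ) or antisymmetric (θ* = -θ). -/

import Mathlib

/-- An involution on a ring: an additive, anti-multiplicative map of order at most 2. -/
def IsInvolution {R : Type*} [Ring R] (τ : R → R) : Prop :=
  (∀ a b : R, τ (a + b) = τ a + τ b) ∧ (∀ a b : R, τ (a * b) = τ b * τ a) ∧
    (∀ a : R, τ (τ a) = a)

/-- Every finite extension `K/F` of fields of characteristic zero with involution `τ`
(with `F` τ-invariant) is generated over `F` by a single symmetric or antisymmetric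
element. -/
theorem stmt_1 (F K : Type*) [Field F] [Field K] [Algebra F K]
    [FiniteDimensional F K] [CharZero K]
    (τ : K → K) (hτ : IsInvolution τ)
    (hF : ∀ a : F, τ (algebraMap F K a) ∈ (algebraMap F K).range) :
    ∃ θ : K, (τ θ = θ ∨ τ θ = -θ) ∧ Algebra.adjoin F {θ} = ⊤ := by
  classical
  obtain ⟨hadd, hmul, hinvol⟩ := hτ
  -- basic properties of τ
  have hτ0 : τ 0 = 0 := by
    have h := hadd 0 0
    rw [add_zero] at h
    exact (add_eq_left.mp h.symm)
  have hneg : ∀ x : K, τ (-x) = -τ x := by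
    intro x
    have h : τ x + τ (-x) = 0 := by rw [← hadd, add_neg_cancel, hτ0]
    exact eq_neg_of_add_eq_zero_right h
  have hsub : ∀ x y : K, τ (x - y) = τ x - τ y := by
    intro x y
    rw [sub_eq_add_neg, hadd, hneg, sub_eq_add_neg]
  have hτ1 : τ 1 = 1 := by
    have h := hmul 1 1
    rw [mul_one] at h
    have hne : τ 1 ≠ 0 := by
      intro h0
      have : (1 : K) = 0 := by rw [← hinvol 1, h0, hτ0]
      exact one_ne_zero this
    have : τ 1 * τ 1 = τ 1 * 1 := by rw [mul_one, ← h]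
    exact (mul_left_cancel₀ hne this)
  have hnat : ∀ n : ℕ, τ (n : K) = n := by
    intro n
    induction n with
    | zero => simpa using hτ0
    | succ m ih => push_cast; rw [hadd, ih, hτ1]
  -- separability and primitive element
  haveI : CharZero F := (algebraMap F K).charZero
  haveI : Algebra.IsAlgebraic F K := Algebra.IsAlgebraic.of_finite F K
  haveI : Algebra.IsSeparable F K := Algebra.IsAlgebraic.isSeparable_of_perfectField
  obtain ⟨α, hα⟩ := Field.exists_primitive_element F K
  have key : ∀ θ : K, IntermediateField.adjoin F {θ} = ⊤ → Algebra.adjoin F {θ} = ⊤ := by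
    intro θ h
    have h2 := IntermediateField.adjoin_simple_toSubalgebra_of_isAlgebraic
      (F := F) (α := θ) (IsIntegral.of_finite F θ).isAlgebraic
    rw [h, IntermediateField.top_toSubalgebra] at h2
    exact h2.symm
  by_cases hα2 : τ α = α
  · exact ⟨α, Or.inl hα2, key α hα⟩
  -- symmetric and antisymmetric parts
  have h2K : (2 : K) ≠ 0 := two_ne_zero
  have hτ2 : τ (2 : K) = 2 := by
    have h := hadd 1 1
    rw [hτ1, one_add_one_eq_two] at h
    exact h
  have hτinv2 : τ ((2 : K)⁻¹) = (2 : K)⁻¹ := by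
    have h := hmul (2 : K) (2 : K)⁻¹
    rw [mul_inv_cancel₀ h2K, hτ1, hτ2] at h
    exact eq_inv_of_mul_eq_one_left h.symm
  set s : K := (α + τ α) * (2 : K)⁻¹ with hs_def
  set a : K := (α - τ α) * (2 : K)⁻¹ with ha_def
  have hs : τ s = s := by
    rw [hs_def, hmul, hτinv2, hadd, hinvol]; ring
  have ha : τ a = -a := by
    rw [ha_def, hmul, hτinv2, hsub, hinvol]; ring
  have ha0 : a ≠ 0 := by
    intro h
    apply hα2
    rw [ha_def, mul_eq_zero] at h
    rcases h with h | h
    · have : α = τ α := by linear_combination h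
      exact this.symm
    · exact absurd h (inv_ne_zero h2K)
  have hsa : s + a = α := by
    rw [hs_def, ha_def]
    field_simp
    ring
  set u : K := s * a with hu_def
  have hu : τ u = -u := by rw [hu_def, hmul, ha, hs]; ring
  -- finitely many intermediate fields, pigeonhole
  haveI : Finite (IntermediateField F K) :=
    Field.finite_intermediateField_of_exists_primitive_element F K ⟨α, hα⟩
  obtain ⟨c, c', hne, hEeq⟩ := Finite.exists_ne_map_eq_of_infinite
    (fun c : ℕ => IntermediateField.adjoin F {u + (c : K) * a})
  set E := IntermediateField.adjoin F {u + (c : K) * a} with hE_def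
  have hm1 : u + (c : K) * a ∈ E := IntermediateField.mem_adjoin_simple_self F _
  have hm2 : u + (c' : K) * a ∈ E := by
    have : E = IntermediateField.adjoin F {u + (c' : K) * a} := hEeq
    rw [this]
    exact IntermediateField.mem_adjoin_simple_self F _
  have hd : ((c : K) - (c' : K)) ≠ 0 := by
    rw [sub_ne_zero]
    exact_mod_cast hne
  have h3 : ((c : K) - (c' : K)) * a ∈ E := by
    have h := sub_mem hm1 hm2
    rwa [show (u + (c : K) * a) - (u + (c' : K) * a) = ((c : K) - (c' : K)) * a from by ring] at h
  have hdE : ((c : K) - (c' : K)) ∈ E := sub_mem (natCast_mem E c) (natCast_mem E c')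
  have hvE : a ∈ E := by
    have h := mul_mem (inv_mem hdE) h3
    rwa [inv_mul_cancel_left₀ hd] at h
  have huE : u ∈ E := by
    have h := sub_mem hm1 (mul_mem (natCast_mem E c) hvE)
    rwa [add_sub_cancel_right] at h
  have hsE : s ∈ E := by
    have h := mul_mem huE (inv_mem hvE)
    rwa [hu_def, mul_inv_cancel_right₀ ha0] at h
  have hαE : α ∈ E := by
    rw [← hsa]
    exact add_mem hsE hvE
  have hEtop : E = ⊤ := by
    rw [eq_top_iff, ← hα]
    exact IntermediateField.adjoin_simple_le_iff.mpr hαE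
  refine ⟨u + (c : K) * a, Or.inr ?_, key _ hEtop⟩
  rw [hadd, hu, hmul, hnat c, ha]
  ring
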